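/- arXiv:2202.13783 — 11 statements merged into one kernel-verified Lean document; each statement's English description precedes it below -/
import Mathlib

section
/- Let m be a positive integer. If N = 16m² + 1 is composite, then there exists a natural number b with 4b + 1 ≤ √N (equivalently (4b+1)² ≤ N) such that m² + b² ≡ 0 (mod 4b + 1); moreover 4b + 1 is a proper factor of N (i.e., 1 < 4b + 1 < N and (4b+1) ∣ N). -/
theorem stmt_0 (m : ℕ) (hm : 0 < m) (N : ℕ) (hN : N = 16 * m ^ 2 + 1)
    (hcomp : ¬ N.Prime) :
    ∃ b : ℕ, (4 * b + 1) ^ 2 ≤ N ∧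
      (4 * b + 1) ∣ (m ^ 2 + b ^ 2) ∧
      (4 * b + 1) ∣ N ∧ 1 < 4 * b + 1 ∧ 4 * b + 1 < N := by
  have hN1 : N ≠ 1 := by nlinarith
  set p := N.minFac with hp
  have hpp : p.Prime := Nat.minFac_prime hN1
  have hpd : p ∣ N := Nat.minFac_dvd N
  have hNodd : ¬ 2 ∣ N := by omega
  have hp2 : p ≠ 2 := fun h => hNodd (h ▸ hpd)
  haveI : Fact p.Prime := ⟨hpp⟩
  have hsq : ((4 * m : ℕ) : ZMod p) ^ 2 = -1 := by
    have h0 : ((N : ℕ) : ZMod p) = 0 := (ZMod.natCast_eq_zero_iff _ _).2 hpd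
    rw [hN] at h0
    push_cast at h0 ⊢
    linear_combination h0
  have h3 : p % 4 ≠ 3 := by
    rw [← ZMod.exists_sq_eq_neg_one_iff]
    exact ⟨_, by rw [sq] at hsq; exact hsq.symm⟩
  have hodd : p % 2 = 1 := Nat.odd_iff.mp (hpp.odd_of_ne_two hp2)
  have hmod : p % 4 = 1 := by omega
  obtain ⟨b, hb⟩ : ∃ b, p = 4 * b + 1 := ⟨p / 4, by omega⟩
  have hb1 : 1 ≤ b := by
    have := hpp.two_le
    omega
  have hsqle : p ^ 2 ≤ N := Nat.minFac_sq_le_self (by omega : 0 < N) hcomp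
  refine ⟨b, hb ▸ hsqle, ?_, hb ▸ hpd, by omega, ?_⟩
  · have hdvd16 : p ∣ 16 * (m ^ 2 + b ^ 2) := by
      have h1 : p ∣ 16 * b ^ 2 - 1 := ⟨4 * b - 1, by
        rw [hb]
        zify [show (1:ℕ) ≤ 16 * b ^ 2 by nlinarith, show (1:ℕ) ≤ 4 * b by omega]
        ring⟩
      have h2 : 16 * (m ^ 2 + b ^ 2) = N + (16 * b ^ 2 - 1) := by
        rw [hN]
        zify [show (1:ℕ) ≤ 16 * b ^ 2 by nlinarith]
        ring
      rw [h2]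
      exact Nat.dvd_add hpd h1
    have hcop : Nat.Coprime p 16 := by
      have h2 : Nat.Coprime p 2 := (Nat.coprime_primes hpp Nat.prime_two).2 hp2
      simpa using (h2.pow_right 4 : Nat.Coprime p (2 ^ 4))
    rw [← hb]
    exact Nat.Coprime.dvd_of_dvd_mul_left hcop hdvd16
  · have h2 := hpp.two_le
    have : p < p ^ 2 := by nlinarith
    omega
end

section
/- Let m be a positive integer. If N = 16m² + 1 is composite, then there exists a positive integer u such that (8u + 1)² − N is a perfect square and N = (8u + 1 + √((8u + 1)² − N)) · (8u + 1 − √((8u + 1)² − N)), with both factors being proper factors of N. -/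
lemma aux_three_mod_four (k : ℕ) (hk : k % 4 = 3) :
    ∃ p : ℕ, p.Prime ∧ p ∣ k ∧ p % 4 = 3 := by
  induction k using Nat.strong_induction_on with
  | _ k ih =>
    have hk1 : k ≠ 1 := by omega
    obtain ⟨p, hp, hpd⟩ := Nat.exists_prime_and_dvd hk1
    rcases eq_or_ne (p % 4) 3 with h3 | h3
    · exact ⟨p, hp, hpd, h3⟩
    · obtain ⟨c, rfl⟩ := hpd
      have hp1 : p % 4 = 1 := by
        have := hp.two_le
        have h2 : ¬ (2 ∣ p) := fun h => by
          have := h.trans (Dvd.intro c rfl)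
          omega
        omega
      have hc3 : c % 4 = 3 := by
        have h := Nat.mul_mod p c 4
        rw [hp1] at h
        omega
      have hclt : c < p * c := by
        have := hp.two_le
        have hc0 : 0 < c := by omega
        nlinarith
      obtain ⟨q, hq, hqd, hq3⟩ := ih c hclt hc3
      exact ⟨q, hq, hqd.mul_left p, hq3⟩

lemma aux_mod16' : ∀ x y : Fin 16, x.val % 4 = 1 → y.val % 4 = 1 →
    x.val * y.val % 16 = 1 → (x.val + y.val) % 16 = 2 := by decide

lemma aux_mod16 (x y : ℕ) (hx : x < 16) (hy : y < 16) (h1 : x % 4 = 1)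
    (h2 : y % 4 = 1) (h3 : x * y % 16 = 1) : (x + y) % 16 = 2 :=
  aux_mod16' ⟨x, hx⟩ ⟨y, hy⟩ h1 h2 h3

theorem stmt_1 (m : ℕ) (hm : 0 < m) (N : ℕ) (hN : N = 16 * m ^ 2 + 1)
    (hcomp : ¬ N.Prime) :
    ∃ u : ℕ, 0 < u ∧ ∃ d : ℕ, (8 * u + 1) ^ 2 = N + d ^ 2 ∧
      N = (8 * u + 1 + d) * (8 * u + 1 - d) ∧
      ((8 * u + 1 + d) ∣ N ∧ 1 < 8 * u + 1 + d ∧ 8 * u + 1 + d < N) ∧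
      ((8 * u + 1 - d) ∣ N ∧ 1 < 8 * u + 1 - d ∧ 8 * u + 1 - d < N) := by
  subst hN
  set N := 16 * m ^ 2 + 1 with hN
  have hN2 : 2 ≤ N := by nlinarith
  -- -1 is a square mod N
  have hsq : IsSquare (-1 : ZMod N) := by
    refine ⟨(4 * m : ℕ), ?_⟩
    have h0 : ((N : ℕ) : ZMod N) = 0 := ZMod.natCast_self N
    rw [hN] at h0
    push_cast at h0 ⊢
    linear_combination -h0
  -- every divisor of N is ≡ 1 mod 4
  have hdiv4 : ∀ k : ℕ, k ∣ N → 1 < k → k % 4 = 1 := by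
    intro k hk hk1
    have hodd : N % 2 = 1 := by omega
    have hkodd : k % 2 = 1 := by
      have h2 : ¬ (2 ∣ k) := fun h => by have := h.trans hk; omega
      omega
    rcases eq_or_ne (k % 4) 3 with h3 | h3
    · exfalso
      obtain ⟨p, hp, hpd, hp3⟩ := aux_three_mod_four k h3
      exact Nat.mod_four_ne_three_of_mem_primeFactors_of_isSquare_neg_one (Nat.mem_primeFactors.mpr ⟨hp, hpd.trans hk, by omega⟩) hsq hp3
    · omega
  -- get a nontrivial factorization
  obtain ⟨a0, ha0d, ha02, ha0lt⟩ := Nat.exists_dvd_of_not_prime2 hN2 hcomp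
  obtain ⟨b0, hab0⟩ := ha0d
  set a := min a0 b0 with hadef
  set b := max a0 b0 with hbdef
  have hab : N = a * b := by
    rcases le_total a0 b0 with h | h
    · rw [hadef, hbdef, min_eq_left h, max_eq_right h]; exact hab0
    · rw [hadef, hbdef, min_eq_right h, max_eq_left h, mul_comm]; exact hab0
  have hb02 : 2 ≤ b0 := by
    rcases Nat.lt_or_ge b0 2 with h | h
    · interval_cases b0 <;> omega
    · exact h
  have ha2 : 2 ≤ a := le_min ha02 hb02
  have hb2 : 2 ≤ b := le_trans ha02 (le_max_left _ _)
  have haleb : a ≤ b := min_le_max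
  have hadN : a ∣ N := ⟨b, hab⟩
  have hbdN : b ∣ N := ⟨a, by rw [hab, mul_comm]⟩
  have haltN : a < N := by nlinarith
  have hbltN : b < N := by nlinarith
  have ha4 : a % 4 = 1 := hdiv4 a hadN (by omega)
  have hb4 : b % 4 = 1 := hdiv4 b hbdN (by omega)
  have hN16 : N % 16 = 1 := by omega
  have habmod : (a + b) % 16 = 2 := by
    have h := aux_mod16 (a % 16) (b % 16) (Nat.mod_lt _ (by norm_num))
      (Nat.mod_lt _ (by norm_num)) (by omega) (by omega)
      (by rw [← Nat.mul_mod, ← hab]; exact hN16)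
    omega
  -- set up s = a + t, b = a + 2t
  obtain ⟨t, ht⟩ : ∃ t, b = a + 2 * t := by
    have : (b - a) % 2 = 0 := by omega
    exact ⟨(b - a) / 2, by omega⟩
  have hs8 : (a + t) % 8 = 1 := by omega
  refine ⟨(a + t - 1) / 8, by omega, t, ?_, ?_, ?_, ?_⟩
  · have h8 : 8 * ((a + t - 1) / 8) + 1 = a + t := by omega
    rw [h8, hab, ht]; ring
  · have h8 : 8 * ((a + t - 1) / 8) + 1 = a + t := by omega
    rw [h8, hab, ht]
    have : a + t + t - t = a + t := by omega
    rw [Nat.add_sub_cancel]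
    ring
  · have h8 : 8 * ((a + t - 1) / 8) + 1 + t = b := by omega
    rw [h8]
    exact ⟨hbdN, by omega, hbltN⟩
  · have h8 : 8 * ((a + t - 1) / 8) + 1 - t = a := by omega
    rw [h8]
    exact ⟨hadN, by omega, haltN⟩
end

section
/- Let m be a positive integer and N = 16m² + 1 be composite. Then there exists a positive integer u such that (8u + 1)² − N is a perfect square, N = (8u + 1)² − ((8u+1)² − N), the two numbers 8u + 1 ± √((8u+1)² − N) are proper factors of N, and u satisfies the bounds N ≤ (8u + 1)² and 40u + 5 ≤ N. -/
theorem stmt_2 (m : ℕ) (hm : 0 < m) (N : ℕ) (hN : N = 16 * m ^ 2 + 1)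
    (hcomp : ¬ N.Prime) :
    ∃ u : ℕ, 0 < u ∧ ∃ d : ℕ, (8 * u + 1) ^ 2 = N + d ^ 2 ∧
      N = (8 * u + 1) ^ 2 - d ^ 2 ∧
      ((8 * u + 1 + d) ∣ N ∧ 1 < 8 * u + 1 + d ∧ 8 * u + 1 + d < N) ∧
      ((8 * u + 1 - d) ∣ N ∧ 1 < 8 * u + 1 - d ∧ 8 * u + 1 - d < N) ∧
      N ≤ (8 * u + 1) ^ 2 ∧ 40 * u + 5 ≤ N := by
  have hm2 : 1 ≤ m ^ 2 := Nat.one_le_pow _ _ hm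
  have hN1 : 17 ≤ N := by omega
  set a := N.minFac with ha
  have hap : a.Prime := Nat.minFac_prime (by omega)
  have hsq : a ^ 2 ≤ N := Nat.minFac_sq_le_self (by omega) hcomp
  obtain ⟨b, hab⟩ := Nat.minFac_dvd N
  rw [← ha] at hab
  have hbdvd : b ∣ N := ⟨a, by rw [hab, mul_comm]⟩
  have hNodd : N % 2 = 1 := by omega
  have haodd : a % 2 = 1 := by
    rcases Nat.even_or_odd a with h | h
    · exfalso
      obtain ⟨k, hk⟩ := h
      have : 2 ∣ N := by rw [hab]; exact ⟨k * b, by rw [hk]; ring⟩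
      omega
    · exact Nat.odd_iff.mp h
  have hbodd : b % 2 = 1 := by
    rcases Nat.even_or_odd b with h | h
    · exfalso
      obtain ⟨k, hk⟩ := h
      have : 2 ∣ N := by rw [hab]; exact ⟨a * k, by rw [hk]; ring⟩
      omega
    · exact Nat.odd_iff.mp h
  haveI : Fact a.Prime := ⟨hap⟩
  have h0 : ((N : ℕ) : ZMod a) = 0 := (ZMod.natCast_eq_zero_iff _ _).mpr ⟨b, hab⟩
  have hsqr : IsSquare (-1 : ZMod a) := by
    refine ⟨(4 * m : ℕ), ?_⟩
    rw [hN] at h0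
    push_cast at h0 ⊢
    linear_combination -h0
  have h43 : a % 4 ≠ 3 := (ZMod.exists_sq_eq_neg_one_iff).mp hsqr
  have ha4 : a % 4 = 1 := by omega
  have ha2 : 2 ≤ a := hap.two_le
  have ha5 : 5 ≤ a := by omega
  have hb1 : 1 < b := by
    rcases Nat.lt_or_ge b 2 with h | h
    · interval_cases b
      · omega
      · exfalso; apply hcomp; rw [show N = a by omega]; exact hap
    · omega
  have hab' : a ≤ b := by
    have : a * a ≤ a * b := by
      calc a * a = a ^ 2 := by ring
        _ ≤ N := hsq
        _ = a * b := hab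
    exact Nat.le_of_mul_le_mul_left this (by omega)
  have hbltN : b < N := by
    have h2 : 2 * b ≤ a * b := Nat.mul_le_mul ha2 le_rfl
    rw [hab]; omega
  have haltN : a < N := by
    have h2 : a * 2 ≤ a * b := Nat.mul_le_mul le_rfl hb1
    rw [hab]; omega
  -- mod 16 analysis
  have hN16 : N % 16 = 1 := by omega
  have hmod : N % 16 = (a % 16) * (b % 16) % 16 := by rw [hab, Nat.mul_mod]
  have ha16 : a % 16 = 1 ∨ a % 16 = 5 ∨ a % 16 = 9 ∨ a % 16 = 13 := by omega
  have hs16 : (a + b) % 16 = 2 := by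
    have hblt : b % 16 < 16 := Nat.mod_lt _ (by omega)
    rcases ha16 with h | h | h | h <;> rw [h] at hmod <;> omega
  obtain ⟨d, hd⟩ : ∃ d, b = 2 * d + a := ⟨(b - a) / 2, by omega⟩
  obtain ⟨u, hu⟩ : ∃ u, a + b = 16 * u + 2 := ⟨(a + b - 2) / 16, by omega⟩
  have hc : 8 * u + 1 = a + d := by omega
  refine ⟨u, by omega, d, ?_, ?_, ⟨?_, ?_, ?_⟩, ⟨?_, ?_, ?_⟩, ?_, ?_⟩
  · rw [hc, hab, hd]; ring
  · rw [hc, hab, hd]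
    have : (a + d) ^ 2 = a * (2 * d + a) + d ^ 2 := by ring
    rw [this, Nat.add_sub_cancel]
  · rw [show 8 * u + 1 + d = b by omega]; exact hbdvd
  · omega
  · omega
  · rw [show 8 * u + 1 - d = a by omega]; exact ⟨b, hab⟩
  · omega
  · omega
  · rw [hc, hab, hd, show (a + d) ^ 2 = a * (2 * d + a) + d ^ 2 from by ring]
    exact Nat.le_add_right _ _
  · have h5 : 40 * u + 5 = 5 * (a + d) := by omega
    have h1 : 5 * a ≤ a * a := Nat.mul_le_mul ha5 le_rfl
    have h2 : 5 * d ≤ a * d := Nat.mul_le_mul ha5 le_rfl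
    have h3 : a * (2 * d + a) = a * a + 2 * (a * d) := by ring
    rw [h5, hab, hd]; omega
end

section
/- Let m be a positive integer and N = 16m² + 1 be composite. Then every proper factor of N can be expressed as 8u + 1 + √((8u + 1)² − N) or 8u + 1 − √((8u + 1)² − N) for some positive integer u such that (8u + 1)² − N is a perfect square, N ≤ (8u + 1)², and 40u + 5 ≤ N. -/
lemma prime_dvd_mod4 (m p : ℕ) (hp : p.Prime) (hd : p ∣ 16 * m ^ 2 + 1) :
    p % 4 = 1 := by
  have hp2 : p ≠ 2 := by
    rintro rfl
    obtain ⟨k, hk⟩ := hd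
    obtain ⟨t, ht⟩ : ∃ t, m ^ 2 = t := ⟨_, rfl⟩
    omega
  haveI : Fact p.Prime := ⟨hp⟩
  have h0 : ((16 * m ^ 2 + 1 : ℕ) : ZMod p) = 0 :=
    (ZMod.natCast_eq_zero_iff _ _).mpr hd
  have hsq : IsSquare (-1 : ZMod p) := by
    refine ⟨(4 * m : ℕ), ?_⟩
    push_cast at h0 ⊢
    linear_combination -h0
  have h3 : p % 4 ≠ 3 := (ZMod.exists_sq_eq_neg_one_iff).mp hsq
  have hodd : p % 2 = 1 := by
    rcases Nat.Prime.eq_two_or_odd hp with h | h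
    · exact absurd h hp2
    · exact h
  omega

lemma dvd_mod4 (m : ℕ) : ∀ f, f ∣ 16 * m ^ 2 + 1 → f % 4 = 1 := by
  intro f
  induction f using Nat.strong_induction_on with
  | _ f ih =>
    intro hf
    rcases eq_or_ne f 1 with rfl | h1
    · rfl
    have hf0 : f ≠ 0 := by
      rintro rfl
      have := Nat.eq_zero_of_zero_dvd hf
      omega
    obtain ⟨p, hp, hpf⟩ := Nat.exists_prime_and_dvd h1
    have hpN : p ∣ 16 * m ^ 2 + 1 := hpf.trans hf
    have hp4 := prime_dvd_mod4 m p hp hpN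
    obtain ⟨k, rfl⟩ := hpf
    have hk0 : k ≠ 0 := by
      rintro rfl; simp at hf0
    have hklt : k < p * k :=
      lt_mul_of_one_lt_left (Nat.pos_of_ne_zero hk0) hp.one_lt
    have hkN : k ∣ 16 * m ^ 2 + 1 := (Dvd.intro_left p rfl).trans hf
    have hk4 : k % 4 = 1 := ih k hklt hkN
    have : (p * k) % 4 = (p % 4) * (k % 4) % 4 := Nat.mul_mod p k 4
    rw [hp4, hk4] at this
    omega

set_option maxHeartbeats 1000000 in
theorem stmt_7 (m : ℕ) (hm : 0 < m) (N : ℕ) (hN : N = 16 * m ^ 2 + 1)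
    (hcomp : ¬ N.Prime) :
    ∀ f : ℕ, f ∣ N → 1 < f → f < N →
      ∃ u d : ℕ, 0 < u ∧ (8 * u + 1) ^ 2 = N + d ^ 2 ∧
        N ≤ (8 * u + 1) ^ 2 ∧ 40 * u + 5 ≤ N ∧
        (f = 8 * u + 1 + d ∨ f = 8 * u + 1 - d) := by
  intro f hdvd hf1 hfN
  have hfg : f * (N / f) = N := Nat.mul_div_cancel' hdvd
  set g := N / f with hg
  have hgdvd : g ∣ N := ⟨f, by rw [mul_comm]; exact hfg.symm⟩
  have hf4 : f % 4 = 1 := dvd_mod4 m f (hN ▸ hdvd)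
  have hg4 : g % 4 = 1 := dvd_mod4 m g (hN ▸ hgdvd)
  have hN16 : N % 16 = 1 := by
    obtain ⟨t, ht⟩ : ∃ t, m ^ 2 = t := ⟨_, rfl⟩
    omega
  have hg1 : 1 < g := by
    rcases Nat.lt_or_ge g 2 with h | h
    · interval_cases g <;> omega
    · omega
  obtain ⟨a, ha⟩ : ∃ a, f = 4 * a + 1 := ⟨f / 4, by omega⟩
  obtain ⟨b, hb⟩ : ∃ b, g = 4 * b + 1 := ⟨g / 4, by omega⟩
  have ha1 : 1 ≤ a := by omega
  have hb1 : 1 ≤ b := by omega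
  have hprod : (4 * a + 1) * (4 * b + 1) = N := by rw [← ha, ← hb]; exact hfg
  have hexp : N = 16 * (a * b) + 4 * (a + b) + 1 := by rw [← hprod]; ring
  obtain ⟨t, ht⟩ : ∃ t, a * b = t := ⟨_, rfl⟩
  rw [ht] at hexp
  obtain ⟨u, hu⟩ : ∃ u, a + b = 4 * u := ⟨(a + b) / 4, by omega⟩
  have hu0 : 0 < u := by omega
  have hkey : a + b ≤ a * b + 1 := by nlinarith
  have h40 : 40 * u + 5 ≤ N := by nlinarith
  have h8u : 8 * u = 2 * a + 2 * b := by omega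
  rcases le_total b a with hba | hab
  · have hid : (8 * u + 1) ^ 2 = N + (2 * (a - b)) ^ 2 := by
      obtain ⟨c, hc⟩ : ∃ c, a = b + c := ⟨a - b, by omega⟩
      have hcd : a - b = c := by omega
      rw [hcd, ← hprod, hc]
      have h8 : 8 * u = 2 * (b + c) + 2 * b := by omega
      rw [h8]; ring
    exact ⟨u, 2 * (a - b), hu0, hid, by rw [hid]; exact Nat.le_add_right _ _, h40, Or.inl (by omega)⟩
  · have hid : (8 * u + 1) ^ 2 = N + (2 * (b - a)) ^ 2 := by
      obtain ⟨c, hc⟩ : ∃ c, b = a + c := ⟨b - a, by omega⟩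
      have hcd : b - a = c := by omega
      rw [hcd, ← hprod, hc]
      have h8 : 8 * u = 2 * a + 2 * (a + c) := by omega
      rw [h8]; ring
    exact ⟨u, 2 * (b - a), hu0, hid, by rw [hid]; exact Nat.le_add_right _ _, h40, Or.inr (by omega)⟩
end

section
/- Let m be a nonnegative integer. If N = 4(2m + 1)² + 1 is composite, then there exists a positive integer u such that (8u + 3)² − N is a perfect square and N = (8u + 3 + √((8u + 3)² − N)) · (8u + 3 − √((8u + 3)² − N)), with both factors being proper factors of N. -/
/-- Every divisor of `y^2+1` with `y` even is `≡ 1 (mod 4)`. -/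
lemma stmt8_div_mod4 (y : ℕ) (hy : y % 2 = 0) :
    ∀ c : ℕ, c ∣ y ^ 2 + 1 → c % 4 = 1 := by
  intro c
  induction c using Nat.strong_induction_on with
  | _ c ih =>
    intro hc
    rcases eq_or_ne c 1 with rfl | hne
    · rfl
    have hc0 : c ≠ 0 := by
      rintro rfl
      have : y ^ 2 + 1 = 0 := Nat.eq_zero_of_zero_dvd hc
      omega
    obtain ⟨p, hp, hpd⟩ := Nat.exists_prime_and_dvd hne
    have hpN : p ∣ y ^ 2 + 1 := hpd.trans hc
    have hpodd : p ≠ 2 := by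
      rintro rfl
      obtain ⟨t, rfl⟩ : 2 ∣ y := by omega
      obtain ⟨q, hq⟩ := hpN
      have : (2 * t) ^ 2 + 1 = 4 * (t * t) + 1 := by ring
      omega
    have hp2 : p % 2 = 1 := Nat.odd_iff.mp (hp.odd_of_ne_two hpodd)
    haveI : Fact p.Prime := ⟨hp⟩
    have hcast : ((y : ZMod p)) ^ 2 + 1 = 0 := by
      have h0 : ((y ^ 2 + 1 : ℕ) : ZMod p) = 0 :=
        (ZMod.natCast_eq_zero_iff _ _).mpr hpN
      push_cast at h0
      exact h0
    have hsq : IsSquare (-1 : ZMod p) := by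
      refine ⟨(y : ZMod p), ?_⟩
      linear_combination -hcast
    have hp4 : p % 4 ≠ 3 := (ZMod.exists_sq_eq_neg_one_iff).mp hsq
    have hp41 : p % 4 = 1 := by omega
    obtain ⟨c', rfl⟩ := hpd
    have hc' : c' ∣ y ^ 2 + 1 := (dvd_mul_left c' p).trans hc
    have hc'0 : c' ≠ 0 := by rintro rfl; simp at hc0
    have hlt : c' < p * c' := by
      have h1 : 1 < p := hp.one_lt
      calc c' = 1 * c' := (one_mul c').symm
        _ < p * c' := by
            exact Nat.mul_lt_mul_of_lt_of_le h1 (le_refl c') (Nat.pos_of_ne_zero hc'0)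
    have hc4 := ih c' hlt hc'
    rw [Nat.mul_mod, hp41, hc4]

lemma stmt8_aux (N a b : ℕ) (hab : N = a * b) (hle : a ≤ b)
    (h16 : N % 16 = 5) (h1a : 1 < a) (hbN : b < N)
    (ha4 : a % 4 = 1) (hb4 : b % 4 = 1) :
    ∃ u : ℕ, 0 < u ∧ ∃ d : ℕ, (8 * u + 3) ^ 2 = N + d ^ 2 ∧
      N = (8 * u + 3 + d) * (8 * u + 3 - d) ∧
      ((8 * u + 3 + d) ∣ N ∧ 1 < 8 * u + 3 + d ∧ 8 * u + 3 + d < N) ∧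
      ((8 * u + 3 - d) ∣ N ∧ 1 < 8 * u + 3 - d ∧ 8 * u + 3 - d < N) := by
  obtain ⟨i, rfl⟩ : ∃ i, a = 4 * i + 1 := ⟨a / 4, by omega⟩
  obtain ⟨e, rfl⟩ : ∃ e, b = (4 * i + 1) + 4 * e := by
    refine ⟨(b - (4 * i + 1)) / 4, by omega⟩
  have hi1 : 1 ≤ i := by omega
  have hp : N = 16 * (i * (i + e)) + 8 * i + 4 * e + 1 := by rw [hab]; ring
  set P := i * (i + e) with hP
  have hmod : (2 * i + e) % 4 = 1 := by omega
  have hie : 2 ≤ 2 * i + e := by omega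
  refine ⟨(2 * i + e - 1) / 4, by omega, 2 * e, ?_, ?_, ?_, ?_⟩
  · have hu : 8 * ((2 * i + e - 1) / 4) + 3 = 4 * i + 2 * e + 1 := by omega
    rw [hu, hp, hP]; ring
  · have h1 : 8 * ((2 * i + e - 1) / 4) + 3 + 2 * e = (4 * i + 1) + 4 * e := by omega
    have h2 : 8 * ((2 * i + e - 1) / 4) + 3 - 2 * e = 4 * i + 1 := by omega
    rw [h1, h2, hab, mul_comm]
  · have h1 : 8 * ((2 * i + e - 1) / 4) + 3 + 2 * e = (4 * i + 1) + 4 * e := by omega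
    rw [h1]
    exact ⟨⟨4 * i + 1, by rw [hab]; ring⟩, by omega, hbN⟩
  · have h2 : 8 * ((2 * i + e - 1) / 4) + 3 - 2 * e = 4 * i + 1 := by omega
    rw [h2]
    exact ⟨⟨(4 * i + 1) + 4 * e, hab⟩, by omega, by omega⟩

theorem stmt_8 (m : ℕ) (N : ℕ) (hN : N = 4 * (2 * m + 1) ^ 2 + 1)
    (hcomp : ¬ N.Prime) :
    ∃ u : ℕ, 0 < u ∧ ∃ d : ℕ, (8 * u + 3) ^ 2 = N + d ^ 2 ∧
      N = (8 * u + 3 + d) * (8 * u + 3 - d) ∧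
      ((8 * u + 3 + d) ∣ N ∧ 1 < 8 * u + 3 + d ∧ 8 * u + 3 + d < N) ∧
      ((8 * u + 3 - d) ∣ N ∧ 1 < 8 * u + 3 - d ∧ 8 * u + 3 - d < N) := by
  have hNy : N = (2 * (2 * m + 1)) ^ 2 + 1 := by rw [hN]; ring
  have hN16 : N % 16 = 5 := by
    have h : N = 16 * (m * (m + 1)) + 5 := by rw [hN]; ring
    omega
  have hN1 : 2 ≤ N := by omega
  obtain ⟨a, ha, ha2, haN⟩ := Nat.exists_dvd_of_not_prime2 hN1 hcomp
  obtain ⟨b, hb⟩ := ha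
  have ha4 : a % 4 = 1 := stmt8_div_mod4 (2 * (2 * m + 1)) (by omega) a ⟨b, by omega⟩
  have hb4 : b % 4 = 1 := stmt8_div_mod4 (2 * (2 * m + 1)) (by omega) b ⟨a, by rw [← hNy, hb]; ring⟩
  have hb1 : 1 < b := by
    rcases Nat.lt_or_ge b 2 with h | h
    · interval_cases b <;> omega
    · exact h
  have hbN : b < N := by nlinarith
  have haN' : a < N := haN
  rcases le_total a b with h | h
  · exact stmt8_aux N a b hb h hN16 ha2 hbN ha4 hb4
  · exact stmt8_aux N b a (by rw [hb]; ring) h hN16 hb1 haN' hb4 ha4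
end

section
/- Let m be a nonnegative integer and N = 4(2m + 1)² + 1 be composite. Then there exists a positive integer u such that (8u + 3)² − N is a perfect square, the two numbers 8u + 3 ± √((8u+3)² − N) are proper factors of N whose product is N, and u satisfies the bounds N ≤ (8u + 3)² and 40u + 15 ≤ N. -/
-- residue check: if a ≡ b ≡ 1 (mod 4) and ab ≡ 5 (mod 32) then a+b ≡ 6 (mod 16)
lemma key_lemma_9 : ∀ A < 32, ∀ B < 32, A % 4 = 1 → B % 4 = 1 →
    A * B % 32 = 5 → (A + B) % 16 = 6 := by decide

lemma prime_mod4_9 (n p : ℕ) (hn : 2 ∣ n) (hp : p.Prime) (hdvd : p ∣ n ^ 2 + 1) :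
    p % 4 = 1 := by
  have hp2 : p ≠ 2 := by
    rintro rfl
    have h1 : (2:ℕ) ∣ n ^ 2 := dvd_pow hn (by norm_num)
    have := Nat.dvd_sub hdvd h1
    simp at this
  haveI : Fact p.Prime := ⟨hp⟩
  have h1 : ((n : ZMod p)) ^ 2 = -1 := by
    have h0 : ((n ^ 2 + 1 : ℕ) : ZMod p) = 0 := by
      rw [ZMod.natCast_eq_zero_iff]
      exact hdvd
    push_cast at h0
    linear_combination h0
  have hsq : IsSquare (-1 : ZMod p) := ⟨n, by rw [← h1]; ring⟩
  have h3 : p % 4 ≠ 3 := (ZMod.exists_sq_eq_neg_one_iff).mp hsq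
  have hodd : p % 2 = 1 := Nat.odd_iff.mp (hp.odd_of_ne_two hp2)
  omega

lemma dvd_mod4_9 (n : ℕ) (hn : 2 ∣ n) : ∀ k, k ∣ n ^ 2 + 1 → k % 4 = 1 := by
  intro k
  induction k using Nat.strong_induction_on with
  | _ k ih =>
    intro hk
    have hk0 : k ≠ 0 := by
      rintro rfl
      have := Nat.eq_zero_of_zero_dvd hk
      omega
    by_cases hk1 : k = 1
    · simp [hk1]
    have hpp : (k.minFac).Prime := Nat.minFac_prime hk1
    have hpk : k.minFac ∣ k := Nat.minFac_dvd k
    have hp4 : k.minFac % 4 = 1 := prime_mod4_9 n _ hn hpp (hpk.trans hk)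
    have hdvdk : k / k.minFac ∣ k := ⟨k.minFac, (Nat.div_mul_cancel hpk).symm⟩
    have hlt : k / k.minFac < k := Nat.div_lt_self (by omega) hpp.one_lt
    have h4 := ih _ hlt (hdvdk.trans hk)
    have hkeq : k = k.minFac * (k / k.minFac) := (Nat.mul_div_cancel' hpk).symm
    rw [hkeq, Nat.mul_mod, hp4, h4]

lemma aux_9 (N a b : ℕ) (h32 : N % 32 = 5) (hdiv : ∀ k, k ∣ N → k % 4 = 1)
    (hab : a * b = N) (h2a : 2 ≤ a) (hale : a ≤ b) :
    ∃ u : ℕ, 0 < u ∧ ∃ d : ℕ, (8 * u + 3) ^ 2 = N + d ^ 2 ∧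
      N = (8 * u + 3 + d) * (8 * u + 3 - d) ∧
      ((8 * u + 3 + d) ∣ N ∧ 1 < 8 * u + 3 + d ∧ 8 * u + 3 + d < N) ∧
      ((8 * u + 3 - d) ∣ N ∧ 1 < 8 * u + 3 - d ∧ 8 * u + 3 - d < N) ∧
      N ≤ (8 * u + 3) ^ 2 ∧ 40 * u + 15 ≤ N := by
  have haN : a ∣ N := ⟨b, hab.symm⟩
  have hbN : b ∣ N := ⟨a, by rw [← hab]; ring⟩
  have ha4 : a % 4 = 1 := hdiv a haN
  have hb4 : b % 4 = 1 := hdiv b hbN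
  have ha5 : 5 ≤ a := by omega
  have hb5 : 5 ≤ b := by omega
  have hbltN : b < N := by nlinarith
  have haltN : a < N := lt_of_le_of_lt hale hbltN
  have hmul : (a % 32) * (b % 32) % 32 = 5 := by rw [← Nat.mul_mod, hab]; exact h32
  have hkey : (a % 32 + b % 32) % 16 = 6 :=
    key_lemma_9 _ (Nat.mod_lt _ (by norm_num)) _ (Nat.mod_lt _ (by norm_num))
      (by omega) (by omega) hmul
  have hsum16 : (a + b) % 16 = 6 := by omega
  obtain ⟨d, hd⟩ : ∃ d, b = a + 2 * d := ⟨(b - a) / 2, by omega⟩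
  obtain ⟨u, hu⟩ : ∃ u, a + d = 8 * u + 3 := ⟨(a + d - 3) / 8, by omega⟩
  have hsd : 8 * u + 3 + d = b := by omega
  have hsd2 : 8 * u + 3 - d = a := by omega
  have hsq : (8 * u + 3) ^ 2 = N + d ^ 2 := by
    rw [← hu, ← hab, hd]; ring
  have h5N : 5 * (a + b) ≤ 2 * N := by
    have h1 : 5 * b ≤ a * b := Nat.mul_le_mul_right b ha5
    omega
  refine ⟨u, by omega, d, hsq, ?_, ?_, ?_, by omega, by omega⟩
  · rw [hsd, hsd2, ← hab]; ring
  · rw [hsd]; exact ⟨hbN, by omega, hbltN⟩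
  · rw [hsd2]; exact ⟨haN, by omega, haltN⟩

theorem stmt_9 (m : ℕ) (N : ℕ) (hN : N = 4 * (2 * m + 1) ^ 2 + 1)
    (hcomp : ¬ N.Prime) :
    ∃ u : ℕ, 0 < u ∧ ∃ d : ℕ, (8 * u + 3) ^ 2 = N + d ^ 2 ∧
      N = (8 * u + 3 + d) * (8 * u + 3 - d) ∧
      ((8 * u + 3 + d) ∣ N ∧ 1 < 8 * u + 3 + d ∧ 8 * u + 3 + d < N) ∧
      ((8 * u + 3 - d) ∣ N ∧ 1 < 8 * u + 3 - d ∧ 8 * u + 3 - d < N) ∧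
      N ≤ (8 * u + 3) ^ 2 ∧ 40 * u + 15 ≤ N := by
  have hN2 : N = (2 * (2 * m + 1)) ^ 2 + 1 := by rw [hN]; ring
  have hdiv : ∀ k, k ∣ N → k % 4 = 1 := by
    rw [hN2]; exact dvd_mod4_9 _ ⟨2 * m + 1, rfl⟩
  have h32 : N % 32 = 5 := by
    obtain ⟨e, he⟩ : 2 ∣ m * (m + 1) := even_iff_two_dvd.mp (Nat.even_mul_succ_self m)
    have hsq : (2 * m + 1) ^ 2 = 4 * (m * (m + 1)) + 1 := by ring
    omega
  have hN2le : 2 ≤ N := by omega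
  obtain ⟨a, haN, h2a, haltN⟩ := Nat.exists_dvd_of_not_prime2 hN2le hcomp
  obtain ⟨b, hb⟩ := haN
  have hab : a * b = N := hb.symm
  rcases le_total a b with h | h
  · exact aux_9 N a b h32 hdiv hab h2a h
  · refine aux_9 N b a h32 hdiv (by rw [← hab]; ring) ?_ h
    -- 2 ≤ b
    by_contra hb2
    interval_cases b <;> omega
end

section
/- Let m be a nonnegative integer and N = 4(2m + 1)² + 1 be composite. Then every proper factor of N can be expressed as 8u + 3 + √((8u + 3)² − N) or 8u + 3 − √((8u + 3)² − N) for some positive integer u such that (8u + 3)² − N is a perfect square, N ≤ (8u + 3)², and 40u + 15 ≤ N. -/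
lemma aux_prime_mod4 (p x : ℕ) (hp : p.Prime) (hdvd : p ∣ x ^ 2 + 1)
    (hx : x % 2 = 0) : p % 4 = 1 := by
  have hp2 : p ≠ 2 := by
    rintro rfl
    obtain ⟨c, hc⟩ := hdvd
    have hx2 : x ^ 2 % 2 = 0 := by rw [Nat.pow_mod, hx]
    omega
  haveI : Fact p.Prime := ⟨hp⟩
  have h0 : ((x ^ 2 + 1 : ℕ) : ZMod p) = 0 :=
    (ZMod.natCast_eq_zero_iff _ _).mpr hdvd
  push_cast at h0
  have h1 : ((x : ZMod p)) ^ 2 = -1 := by linear_combination h0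
  have h2 : IsSquare (-1 : ZMod p) := ⟨x, by rw [← h1]; ring⟩
  have h3 : p % 4 ≠ 3 := ZMod.exists_sq_eq_neg_one_iff.mp h2
  have h4 : Odd p := hp.odd_of_ne_two hp2
  obtain ⟨t, ht⟩ := h4
  omega

lemma aux_div_mod4 (x : ℕ) (hx : x % 2 = 0) :
    ∀ f : ℕ, f ∣ x ^ 2 + 1 → f % 4 = 1 := by
  intro f
  induction f using Nat.strong_induction_on with
  | _ f ih =>
    intro hf
    rcases eq_or_ne f 1 with rfl | h1
    · rfl
    have hf0 : f ≠ 0 := by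
      rintro rfl
      have := Nat.eq_zero_of_zero_dvd hf
      omega
    have hpp : f.minFac.Prime := Nat.minFac_prime h1
    have hpd : f.minFac ∣ f := Nat.minFac_dvd f
    have hpN : f.minFac ∣ x ^ 2 + 1 := hpd.trans hf
    have hp4 : f.minFac % 4 = 1 := aux_prime_mod4 _ _ hpp hpN hx
    have hfd : f = f.minFac * (f / f.minFac) := (Nat.mul_div_cancel' hpd).symm
    have hd : f / f.minFac ∣ x ^ 2 + 1 := (Dvd.intro_left f.minFac hfd.symm).trans hf
    have hlt : f / f.minFac < f :=
      Nat.div_lt_self (Nat.pos_of_ne_zero hf0) hpp.one_lt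
    have hrec : (f / f.minFac) % 4 = 1 := ih _ hlt hd
    calc f % 4 = (f.minFac * (f / f.minFac)) % 4 := by rw [← hfd]
    _ = (f.minFac % 4) * ((f / f.minFac) % 4) % 4 := by rw [Nat.mul_mod]
    _ = 1 := by rw [hp4, hrec]

lemma aux_core (N F G : ℕ) (hN32 : N % 32 = 5) (hFG : F * G = N)
    (hF4 : F % 4 = 1) (hG4 : G % 4 = 1) (h5 : 5 ≤ G) (hle : G ≤ F) :
    ∃ u d : ℕ, 0 < u ∧ (8 * u + 3) ^ 2 = N + d ^ 2 ∧
      N ≤ (8 * u + 3) ^ 2 ∧ 40 * u + 15 ≤ N ∧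
      8 * u + 3 + d = F ∧ 8 * u + 3 - d = G := by
  obtain ⟨d, hd⟩ : ∃ d, F = G + 2 * d := ⟨(F - G) / 2, by omega⟩
  set a := G + d with ha
  have ha2 : a ^ 2 = N + d ^ 2 := by
    have : (G + d) ^ 2 = (G + 2 * d) * G + d ^ 2 := by ring
    rw [ha, this, ← hd, hFG]
  -- residues mod 8
  have hmm : (F % 8) * (G % 8) % 8 = 5 := by
    rw [← Nat.mul_mod, hFG]; omega
  have hF8 : F % 8 = 1 ∨ F % 8 = 5 := by omega
  have hG8 : G % 8 = 1 ∨ G % 8 = 5 := by omega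
  have hkey : d % 4 = 2 ∧ a % 4 = 3 := by
    rcases hF8 with h | h <;> rcases hG8 with h' | h' <;>
      rw [h, h'] at hmm <;> omega
  obtain ⟨hd4, ha4⟩ := hkey
  -- d² ≡ 4 mod 32
  obtain ⟨s, hs⟩ : ∃ s, d = 4 * s + 2 := ⟨d / 4, by omega⟩
  obtain ⟨w, hw⟩ : Even (s * (s + 1)) := Nat.even_mul_succ_self s
  have hsw : s ^ 2 + s = 2 * w := by nlinarith [hw]
  have hd32 : d ^ 2 % 32 = 4 := by
    have : d ^ 2 = 16 * (s ^ 2 + s) + 4 := by rw [hs]; ring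
    omega
  have ha32 : a ^ 2 % 32 = 9 := by rw [ha2]; omega
  -- a ≡ 3 mod 16
  obtain ⟨q, r, hr16, har⟩ : ∃ q r, r < 16 ∧ a = 16 * q + r :=
    ⟨a / 16, a % 16, by omega, by omega⟩
  have hsq : a ^ 2 = 32 * (8 * q ^ 2 + q * r) + r ^ 2 := by rw [har]; ring
  have hr2 : r ^ 2 % 32 = 9 := by omega
  have hr4 : r % 4 = 3 := by omega
  have hr3 : r = 3 := by
    interval_cases r <;> revert hr2 hr4 <;> norm_num
  have ha8 : a % 8 = 3 := by omega
  have ha5 : 5 ≤ a := by omega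
  obtain ⟨u, hu⟩ : ∃ u, a = 8 * u + 3 := ⟨(a - 3) / 8, by omega⟩
  have h5F : F * 5 ≤ F * G := Nat.mul_le_mul_left F h5
  refine ⟨u, d, by omega, by rw [← hu]; exact ha2, by rw [← hu]; omega,
    by omega, by omega, by omega⟩

theorem stmt_13 (m : ℕ) (N : ℕ) (hN : N = 4 * (2 * m + 1) ^ 2 + 1)
    (hcomp : ¬ N.Prime) :
    ∀ f : ℕ, f ∣ N → 1 < f → f < N →
      ∃ u d : ℕ, 0 < u ∧ (8 * u + 3) ^ 2 = N + d ^ 2 ∧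
        N ≤ (8 * u + 3) ^ 2 ∧ 40 * u + 15 ≤ N ∧
        (f = 8 * u + 3 + d ∨ f = 8 * u + 3 - d) := by
  intro f hdvd hf1 hfN
  -- N ≡ 5 mod 32
  obtain ⟨w, hw⟩ : Even (m * (m + 1)) := Nat.even_mul_succ_self m
  have hmw : m ^ 2 + m = 2 * w := by nlinarith [hw]
  have hN16 : N = 16 * (m ^ 2 + m) + 5 := by rw [hN]; ring
  have hN32 : N % 32 = 5 := by omega
  -- N = x² + 1 with x even
  have hNsq : N = (2 * (2 * m + 1)) ^ 2 + 1 := by rw [hN]; ring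
  have hdivs : ∀ g : ℕ, g ∣ N → g % 4 = 1 := by
    intro g hg
    exact aux_div_mod4 (2 * (2 * m + 1)) (by omega) g (hNsq ▸ hg)
  set g := N / f with hg
  have hfg : f * g = N := Nat.mul_div_cancel' hdvd
  have hgdvd : g ∣ N := ⟨f, by rw [← hfg]; ring⟩
  have hf4 : f % 4 = 1 := hdivs f hdvd
  have hg4 : g % 4 = 1 := hdivs g hgdvd
  have hg1 : 1 < g := by
    rcases Nat.lt_or_ge g 2 with h | h
    · interval_cases g <;> omega
    · omega
  have hf5 : 5 ≤ f := by omega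
  have hg5 : 5 ≤ g := by omega
  rcases Nat.le_total f g with hle | hle
  · obtain ⟨u, d, h1, h2, h3, h4, h5, h6⟩ :=
      aux_core N g f hN32 (by rw [mul_comm]; exact hfg) hg4 hf4 hf5 hle
    exact ⟨u, d, h1, h2, h3, h4, Or.inr h6.symm⟩
  · obtain ⟨u, d, h1, h2, h3, h4, h5, h6⟩ :=
      aux_core N f g hN32 hfg hf4 hg4 hg5 hle
    exact ⟨u, d, h1, h2, h3, h4, Or.inl h5.symm⟩
end

section
/- Let n ≥ 4 be an integer and let F_n = 2^(2^n) + 1 be the n-th Fermat number. If F_n is composite, then there exists a positive integer s with 2^(n+2)·s < √(F_n − 1) (equivalently, (2^(n+2)·s)² < F_n − 1 or 2^(2(n+2))·s² < 2^(2^n)) such that 2^(2^n − 2(n+2)) + s² ≡ 0 (mod 2^(n+2)·s + 1); moreover 2^(n+2)·s + 1 is a proper factor of F_n. -/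
lemma aux_two_mul_le_pow {n : ℕ} (hn : 4 ≤ n) : 2 * (n + 2) ≤ 2 ^ n := by
  induction n, hn using Nat.le_induction with
  | base => norm_num
  | succ m hm ih =>
    have h1 : 2 ≤ 2 ^ m := Nat.one_lt_two_pow (by omega)
    rw [pow_succ]
    omega

theorem stmt_16 (n : ℕ) (hn : 4 ≤ n) (F : ℕ) (hF : F = 2 ^ (2 ^ n) + 1)
    (hcomp : ¬ F.Prime) :
    ∃ s : ℕ, 0 < s ∧ (2 ^ (n + 2) * s) ^ 2 < F - 1 ∧
      (2 ^ (n + 2) * s + 1) ∣ (2 ^ (2 ^ n - 2 * (n + 2)) + s ^ 2) ∧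
      (2 ^ (n + 2) * s + 1) ∣ F ∧ 1 < 2 ^ (n + 2) * s + 1 ∧
      2 ^ (n + 2) * s + 1 < F := by
  have hF2 : 2 ≤ F := by
    have : 1 ≤ 2 ^ (2 ^ n) := Nat.one_le_two_pow
    omega
  set p := F.minFac with hp_def
  have hp : p.Prime := Nat.minFac_prime (by omega)
  have hpdvd : p ∣ F := Nat.minFac_dvd F
  have hfermat : F = Nat.fermatNumber n := by rw [hF, Nat.fermatNumber]
  obtain ⟨s, hs⟩ := Nat.fermat_primeFactors_one_lt n p (by omega) hp (hfermat ▸ hpdvd)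
  have hp_eq : p = 2 ^ (n + 2) * s + 1 := by rw [hs]; ring
  have hm2 : 2 ≤ 2 ^ (n + 2) := by
    have : 2 ^ 1 ≤ 2 ^ (n + 2) := Nat.pow_le_pow_right (by norm_num) (by omega)
    simpa using this
  have hs0 : 0 < s := by
    rcases Nat.eq_zero_or_pos s with h | h
    · exfalso; rw [h, mul_zero] at hp_eq
      exact hp.one_lt.ne' hp_eq
    · exact h
  have hr2 : 2 ≤ 2 ^ (n + 2) * s := le_trans hm2 (Nat.le_mul_of_pos_right _ hs0)
  have hsq : p ^ 2 ≤ F := Nat.minFac_sq_le_self (by omega) hcomp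
  have h2m : 2 * (n + 2) ≤ 2 ^ n := aux_two_mul_le_pow hn
  set r := 2 ^ (n + 2) * s with hr_def
  refine ⟨s, hs0, ?_, ?_, hp_eq ▸ hpdvd, by omega, ?_⟩
  · -- r ^ 2 < F - 1
    have h1 : (r + 1) ^ 2 = r ^ 2 + 2 * r + 1 := by ring
    rw [hp_eq] at hsq
    rw [← hr_def]
    omega
  · -- (r + 1) ∣ 2 ^ (2 ^ n - 2 * (n + 2)) + s ^ 2
    have hkey : 2 ^ (2 * (n + 2)) * (2 ^ (2 ^ n - 2 * (n + 2)) + s ^ 2)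
        = F + (r + 1) * (r - 1) := by
      have e1 : 2 ^ (2 * (n + 2)) * 2 ^ (2 ^ n - 2 * (n + 2)) = 2 ^ (2 ^ n) := by
        rw [← pow_add]
        congr 1
        omega
      have e2 : 2 ^ (2 * (n + 2)) * s ^ 2 = r ^ 2 := by
        rw [hr_def, mul_pow, ← pow_mul]
        ring
      have e3 : (r + 1) * (r - 1) + 1 = r ^ 2 := by
        obtain ⟨t, ht⟩ : ∃ t, r = t + 1 := ⟨r - 1, by omega⟩
        rw [ht, Nat.add_sub_cancel]
        ring
      calc 2 ^ (2 * (n + 2)) * (2 ^ (2 ^ n - 2 * (n + 2)) + s ^ 2)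
          = 2 ^ (2 ^ n) + r ^ 2 := by rw [mul_add, e1, e2]
        _ = F + (r + 1) * (r - 1) := by rw [hF]; omega
    have hdvd2 : (r + 1) ∣ 2 ^ (2 * (n + 2)) * (2 ^ (2 ^ n - 2 * (n + 2)) + s ^ 2) := by
      rw [hkey]
      exact Nat.dvd_add (hp_eq ▸ hpdvd) (Dvd.intro _ rfl)
    have hcop : Nat.Coprime (r + 1) (2 ^ (2 * (n + 2))) := by
      apply Nat.Coprime.pow_right
      have hodd : (r + 1) % 2 = 1 := by
        have h2r : 2 ∣ r := by
          rw [hr_def]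
          exact Dvd.dvd.mul_right (dvd_pow_self 2 (by omega)) s
        omega
      rw [Nat.coprime_comm]
      exact Nat.coprime_two_left.mpr (Nat.odd_iff.mpr hodd)
    exact (Nat.Coprime.dvd_of_dvd_mul_left hcop hdvd2)
  · -- r + 1 < F
    have hne : p ≠ F := fun h => hcomp (h ▸ hp)
    have hle : p ≤ F := Nat.le_of_dvd (by omega) hpdvd
    omega
end

section
/- Let n ≥ 5 be an integer and let F_n = 2^(2^n) + 1 be the n-th Fermat number. If F_n is composite, then there exists a positive integer λ such that (2^(2n+3)·λ + 1)² − F_n is a perfect square, the two numbers 2^(2n+3)·λ + 1 ± √((2^(2n+3)·λ + 1)² − F_n) are proper factors of F_n whose product is F_n, and λ satisfies F_n ≤ (2^(2n+3)·λ + 1)² and λ ≤ 2^(2^n − (3n+5)). -/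
lemma exp_bound (n : ℕ) (hn : 5 ≤ n) : 3 * n + 5 ≤ 2 ^ n := by
  induction n with
  | zero => omega
  | succ k ih =>
    rcases Nat.lt_or_ge k 5 with h | h
    · interval_cases k <;> omega
    · have h1 := ih h
      have h2 : (0:ℕ) < 2 ^ k := pow_pos (by norm_num) k
      rw [pow_succ]
      omega

lemma fermat_prime_factor (n p : ℕ) (hn : 2 ≤ n) (hp : p.Prime)
    (hdvd : p ∣ 2 ^ 2 ^ n + 1) : p % 2 ^ (n + 2) = 1 := by
  have hp2 : p ≠ 2 := by
    rintro rfl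
    have h2 : (2:ℕ) ∣ 2 ^ 2 ^ n := dvd_pow_self 2 (pow_pos two_pos n).ne'
    omega
  haveI : Fact p.Prime := ⟨hp⟩
  haveI : Fact (2 < p) := ⟨lt_of_le_of_ne hp.two_le (Ne.symm hp2)⟩
  have h1 : (2 : ZMod p) ^ 2 ^ n = -1 := by
    have h0 : ((2 ^ 2 ^ n + 1 : ℕ) : ZMod p) = 0 :=
      (ZMod.natCast_eq_zero_iff _ _).2 hdvd
    push_cast at h0
    linear_combination h0
  have hne : (-1 : ZMod p) ≠ 1 := ZMod.neg_one_ne_one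
  have horder : orderOf (2 : ZMod p) = 2 ^ (n + 1) := by
    apply orderOf_eq_prime_pow
    · rw [h1]; exact hne
    · rw [pow_succ, pow_mul, h1]; ring
  have h2ne : (2 : ZMod p) ≠ 0 := by
    intro h
    have := (ZMod.natCast_eq_zero_iff 2 p).1 (by exact_mod_cast h)
    exact hp2 (((Nat.prime_dvd_prime_iff_eq hp Nat.prime_two).1 this))
  have hdvd1 : 2 ^ (n + 1) ∣ p - 1 := horder ▸ ZMod.orderOf_dvd_card_sub_one h2ne
  have h8 : p % 8 = 1 := by
    have h3 : (8:ℕ) ∣ 2 ^ (n + 1) := by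
      have : (2:ℕ)^3 ∣ 2 ^ (n+1) := pow_dvd_pow 2 (by omega)
      simpa using this
    have h8d : (8:ℕ) ∣ p - 1 := h3.trans hdvd1
    have := hp.two_le
    omega
  obtain ⟨c, hc⟩ : IsSquare (2 : ZMod p) :=
    (ZMod.exists_sq_eq_two_iff hp2).2 (Or.inl h8)
  have hc2 : c ^ 2 = 2 := by rw [hc]; ring
  have hkey : c ^ 2 ^ (n + 1) = -1 := by
    have he : (2:ℕ) ^ (n+1) = 2 * 2 ^ n := by rw [pow_succ]; ring
    rw [he, pow_mul, hc2, h1]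
  have horderc : orderOf c = 2 ^ (n + 2) := by
    apply orderOf_eq_prime_pow
    · rw [hkey]; exact hne
    · rw [pow_succ, pow_mul, hkey]; norm_num
  have hdvd2 : 2 ^ (n + 2) ∣ p - 1 := horderc ▸ ZMod.orderOf_dvd_card_sub_one
      (fun h => by rw [h] at hc2; simp at hc2; exact h2ne hc2.symm)
  have hmod := (Nat.modEq_iff_dvd' (by have := hp.two_le; omega : 1 ≤ p)).2 hdvd2
  have hM : 1 < 2 ^ (n + 2) := Nat.one_lt_two_pow (by omega)
  calc p % 2 ^ (n+2) = 1 % 2 ^ (n+2) := hmod.symm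
    _ = 1 := Nat.mod_eq_of_lt hM

lemma divisor_mod (M F : ℕ) (hM : 1 < M) (hF0 : F ≠ 0)
    (hprime : ∀ p, p.Prime → p ∣ F → p % M = 1) :
    ∀ d, d ∣ F → d % M = 1 := by
  intro d
  induction d using Nat.strong_induction_on with
  | _ d ih =>
    intro hdF
    have hd0 : d ≠ 0 := by rintro rfl; exact hF0 (Nat.eq_zero_of_zero_dvd hdF)
    rcases eq_or_ne d 1 with rfl | hd1
    · exact Nat.one_mod_eq_one.mpr (by omega)
    · have hp := Nat.minFac_prime hd1
      have hpd : d.minFac ∣ d := Nat.minFac_dvd d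
      have h2 : d / d.minFac < d := Nat.div_lt_self (Nat.pos_of_ne_zero hd0) hp.one_lt
      have h3 : d / d.minFac ∣ F := (Nat.div_dvd_of_dvd hpd).trans hdF
      have h4 := ih _ h2 h3
      have h5 := hprime _ hp (hpd.trans hdF)
      have hd : d = d.minFac * (d / d.minFac) := (Nat.mul_div_cancel' hpd).symm
      rw [hd, Nat.mul_mod, h4, h5]
      simp [Nat.one_mod_eq_one.mpr (by omega : M ≠ 1)]
theorem stmt_17 (n : ℕ) (hn : 5 ≤ n) (F : ℕ) (hF : F = 2 ^ (2 ^ n) + 1)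
    (hcomp : ¬ F.Prime) :
    ∃ l : ℕ, 0 < l ∧ ∃ d : ℕ, (2 ^ (2 * n + 3) * l + 1) ^ 2 = F + d ^ 2 ∧
      F = (2 ^ (2 * n + 3) * l + 1 + d) * (2 ^ (2 * n + 3) * l + 1 - d) ∧
      ((2 ^ (2 * n + 3) * l + 1 + d) ∣ F ∧ 1 < 2 ^ (2 * n + 3) * l + 1 + d ∧
        2 ^ (2 * n + 3) * l + 1 + d < F) ∧
      ((2 ^ (2 * n + 3) * l + 1 - d) ∣ F ∧ 1 < 2 ^ (2 * n + 3) * l + 1 - d ∧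
        2 ^ (2 * n + 3) * l + 1 - d < F) ∧
      F ≤ (2 ^ (2 * n + 3) * l + 1) ^ 2 ∧ l ≤ 2 ^ (2 ^ n - (3 * n + 5)) := by
  have hexp : 3 * n + 5 ≤ 2 ^ n := exp_bound n hn
  have hpow0 : (0:ℕ) < 2 ^ 2 ^ n := pow_pos two_pos _
  have hF1 : 1 < F := by omega
  have hmods : ∀ e, e ∣ F → e % 2 ^ (n + 2) = 1 :=
    divisor_mod _ F (Nat.one_lt_two_pow (by omega)) (by omega)
      (fun p hp hpF => fermat_prime_factor n p (by omega) hp (hF ▸ hpF))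
  set a := F.minFac with ha
  have hpa : a.Prime := Nat.minFac_prime (by omega)
  have haF : a ∣ F := Nat.minFac_dvd F
  set b := F / a with hb
  have hab : a * b = F := Nat.mul_div_cancel' haF
  have ha1 : 1 < a := hpa.one_lt
  have haleb : a ≤ b := by
    have hsq : a ^ 2 ≤ F := Nat.minFac_sq_le_self (by omega) hcomp
    have h : a * a ≤ a * b := by rw [hab]; nlinarith
    exact Nat.le_of_mul_le_mul_left h (by omega)
  have hb1 : 1 < b := lt_of_lt_of_le ha1 haleb
  have hbF : b ∣ F := ⟨a, by rw [← hab]; ring⟩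
  have hamod := hmods a haF
  have hbmod := hmods b hbF
  obtain ⟨s, hs⟩ : ∃ s, a = 2 ^ (n + 2) * s + 1 :=
    ⟨a / 2 ^ (n + 2), by conv_lhs => rw [← Nat.div_add_mod a (2 ^ (n + 2)), hamod]⟩
  obtain ⟨t, ht⟩ : ∃ t, b = 2 ^ (n + 2) * t + 1 :=
    ⟨b / 2 ^ (n + 2), by conv_lhs => rw [← Nat.div_add_mod b (2 ^ (n + 2)), hbmod]⟩
  have hs1 : 1 ≤ s := by rcases Nat.eq_zero_or_pos s with rfl | h; · simp at hs; omega
                         · exact h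
  have ht1 : 1 ≤ t := by rcases Nat.eq_zero_or_pos t with rfl | h; · simp at ht; omega
                         · exact h
  have hst : s ≤ t := by
    have h : 2 ^ (n + 2) * s ≤ 2 ^ (n + 2) * t := by linarith
    exact Nat.le_of_mul_le_mul_left h (pow_pos two_pos _)
  obtain ⟨u, htu⟩ : ∃ u, t = s + u := ⟨t - s, by omega⟩
  -- key identity
  have key : s + t + 2 ^ (n + 2) * (s * t) = 2 ^ (2 ^ n - (n + 2)) := by
    apply Nat.eq_of_mul_eq_mul_left (pow_pos two_pos (n + 2))
    have expand : (2 ^ (n + 2) * s + 1) * (2 ^ (n + 2) * t + 1)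
        = 2 ^ (n + 2) * (s + t + 2 ^ (n + 2) * (s * t)) + 1 := by ring
    have h6 : 2 ^ (n + 2) * (s + t + 2 ^ (n + 2) * (s * t)) + 1 = 2 ^ 2 ^ n + 1 := by
      rw [← expand, ← hs, ← ht, hab, hF]
    have hFe : 2 ^ (n + 2) * 2 ^ (2 ^ n - (n + 2)) = 2 ^ 2 ^ n := by
      rw [← pow_add]; congr 1; omega
    rw [hFe]
    exact Nat.add_right_cancel h6
  have hstlt : s * t < 2 ^ (2 ^ n - (2 * n + 4)) := by
    apply Nat.lt_of_mul_lt_mul_left (a := 2 ^ (n + 2))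
    have hFe2 : 2 ^ (n + 2) * 2 ^ (2 ^ n - (2 * n + 4)) = 2 ^ (2 ^ n - (n + 2)) := by
      rw [← pow_add]; congr 1; omega
    rw [hFe2]
    linarith
  set l := 2 ^ (2 ^ n - (2 * n + 4)) - s * t with hldef
  have hl : l + s * t = 2 ^ (2 ^ n - (2 * n + 4)) := Nat.sub_add_cancel hstlt.le
  have hl0 : 0 < l := by linarith
  have h3 : 2 ^ (2 * n + 4) * l = 2 ^ (n + 2) * (s + t) := by
    have hA : 2 ^ (2 * n + 4) * l + 2 ^ (2 * n + 4) * (s * t) = 2 ^ 2 ^ n := by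
      rw [← Nat.mul_add, hl, ← pow_add]; congr 1; omega
    have hB : 2 ^ (n + 2) * (s + t) + 2 ^ (2 * n + 4) * (s * t) = 2 ^ 2 ^ n := by
      calc 2 ^ (n + 2) * (s + t) + 2 ^ (2 * n + 4) * (s * t)
          = 2 ^ (n + 2) * (s + t + 2 ^ (n + 2) * (s * t)) := by ring
        _ = 2 ^ (n + 2) * 2 ^ (2 ^ n - (n + 2)) := by rw [key]
        _ = 2 ^ 2 ^ n := by rw [← pow_add]; congr 1; omega
    exact Nat.add_right_cancel (hA.trans hB.symm)
  have h4 : 2 ^ (2 * n + 3) * l = 2 ^ (n + 2) * s + 2 ^ (n + 1) * u := by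
    apply Nat.eq_of_mul_eq_mul_left (show 0 < 2 by norm_num)
    calc 2 * (2 ^ (2 * n + 3) * l) = 2 ^ (2 * n + 4) * l := by ring
      _ = 2 ^ (n + 2) * (s + t) := h3
      _ = 2 * (2 ^ (n + 2) * s + 2 ^ (n + 1) * u) := by rw [htu]; ring
  have hma : 2 ^ (2 * n + 3) * l + 1 = a + 2 ^ (n + 1) * u := by
    rw [h4, hs]; ring
  have hmb : 2 ^ (2 * n + 3) * l + 1 + 2 ^ (n + 1) * u = b := by
    rw [h4, ht, htu]; ring
  have hb2 : b = a + 2 * (2 ^ (n + 1) * u) := by rw [ht, htu, hs]; ring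
  have heq : (2 ^ (2 * n + 3) * l + 1) ^ 2 = F + (2 ^ (n + 1) * u) ^ 2 := by
    rw [hma, ← hab, hb2]; ring
  refine ⟨l, hl0, 2 ^ (n + 1) * u, heq, ?_, ⟨?_, ?_, ?_⟩, ⟨?_, ?_, ?_⟩, ?_, ?_⟩
  · rw [hma, Nat.add_sub_cancel, ← hab, hb2]; ring
  · rw [hmb]; exact hbF
  · rw [hmb]; exact hb1
  · rw [hmb]
    calc b < 2 * b := by omega
      _ ≤ a * b := Nat.mul_le_mul_right b (by omega)
      _ = F := hab
  · rw [hma, Nat.add_sub_cancel]; exact haF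
  · rw [hma, Nat.add_sub_cancel]; exact ha1
  · rw [hma, Nat.add_sub_cancel]
    calc a < a * b := by nlinarith
      _ = F := hab
  · rw [heq]; exact Nat.le_add_right _ _
  · -- l ≤ 2 ^ (2 ^ n - (3 * n + 5))
    have hstt : s + t ≤ 2 * (s * t) := by
      have h1' : s ≤ s * t := Nat.le_mul_of_pos_right s (by omega)
      have h2' : t ≤ s * t := by
        calc t ≤ t * s := Nat.le_mul_of_pos_right t (by omega)
          _ = s * t := Nat.mul_comm t s
      linarith
    have hst2 : s + t ≤ 2 ^ (2 ^ n - (2 * n + 3)) := by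
      have h2' : 2 ^ (2 ^ n - (2 * n + 3)) = 2 ^ 1 * 2 ^ (2 ^ n - (2 * n + 4)) := by
        rw [← pow_add]; congr 1; omega
      rw [h2']
      have : 2 ^ 1 * 2 ^ (2 ^ n - (2 * n + 4)) = 2 * 2 ^ (2 ^ n - (2 * n + 4)) := by norm_num
      rw [this]
      linarith
    have hpw : 2 ^ (n + 2) * 2 ^ (2 ^ n - (3 * n + 5)) = 2 ^ (2 ^ n - (2 * n + 3)) := by
      rw [← pow_add]; congr 1; omega
    have hmain : 2 ^ (2 ^ n - (2 * n + 4)) ≤ s * t + 2 ^ (2 ^ n - (3 * n + 5)) := by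
      have hmul : 2 ^ (n + 2) * 2 ^ (2 ^ n - (2 * n + 4))
          ≤ 2 ^ (n + 2) * (s * t + 2 ^ (2 ^ n - (3 * n + 5))) := by
        calc 2 ^ (n + 2) * 2 ^ (2 ^ n - (2 * n + 4))
            = 2 ^ (2 ^ n - (n + 2)) := by rw [← pow_add]; congr 1; omega
          _ = s + t + 2 ^ (n + 2) * (s * t) := key.symm
          _ ≤ 2 ^ (2 ^ n - (2 * n + 3)) + 2 ^ (n + 2) * (s * t) := by linarith
          _ = 2 ^ (n + 2) * (s * t) + 2 ^ (n + 2) * 2 ^ (2 ^ n - (3 * n + 5)) := by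
              rw [hpw]; ring
          _ = 2 ^ (n + 2) * (s * t + 2 ^ (2 ^ n - (3 * n + 5))) := by ring
      exact Nat.le_of_mul_le_mul_left hmul (pow_pos two_pos _)
    linarith
end

section
/- Let n ≥ 5 be an integer, F_n = 2^(2^n) + 1 the n-th Fermat number, and suppose λ is a positive integer such that (2^(2n+3)·λ + 1)² − F_n is a perfect square and both 2^(2n+3)·λ + 1 ± √((2^(2n+3)·λ + 1)² − F_n) are proper factors of F_n whose product is F_n. Then λ ≢ 0 (mod p) for every prime p ≡ 3 (mod 4), and λ ≢ 2 (mod 4). -/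
private lemma two_pow_ge (n : ℕ) (hn : 5 ≤ n) : 2 * n + 6 ≤ 2 ^ n := by
  induction n with
  | zero => omega
  | succ m ih =>
    rcases Nat.lt_or_ge m 5 with h | h
    · interval_cases m <;> simp_all <;> omega
    · have := ih h
      have h1 : (2:ℕ) ≤ 2 ^ m := Nat.one_lt_two_pow (by omega)
      rw [pow_succ]
      omega

theorem stmt_18 (n : ℕ) (hn : 5 ≤ n) (F : ℕ) (hF : F = 2 ^ (2 ^ n) + 1)
    (l : ℕ) (hl : 0 < l) (d : ℕ)
    (hd : (2 ^ (2 * n + 3) * l + 1) ^ 2 = F + d ^ 2)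
    (h₁ : (2 ^ (2 * n + 3) * l + 1 + d) ∣ F ∧ 1 < 2 ^ (2 * n + 3) * l + 1 + d ∧
      2 ^ (2 * n + 3) * l + 1 + d < F)
    (h₂ : (2 ^ (2 * n + 3) * l + 1 - d) ∣ F ∧ 1 < 2 ^ (2 * n + 3) * l + 1 - d ∧
      2 ^ (2 * n + 3) * l + 1 - d < F)
    (hprod : F = (2 ^ (2 * n + 3) * l + 1 + d) * (2 ^ (2 * n + 3) * l + 1 - d)) :
    (∀ p : ℕ, p.Prime → p % 4 = 3 → ¬ p ∣ l) ∧ l % 4 ≠ 2 := by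
  subst hF
  have hle : 2 * n + 6 ≤ 2 ^ n := two_pow_ge n hn
  -- rearrange hd
  have h1 : 2 ^ (4 * n + 6) * l ^ 2 + 2 ^ (2 * n + 4) * l = 2 ^ (2 ^ n) + d ^ 2 := by
    have p1 : (2:ℕ) ^ (4 * n + 6) = 2 ^ (2 * n + 3) * 2 ^ (2 * n + 3) := by
      rw [← pow_add]; ring_nf
    have p2 : (2:ℕ) ^ (2 * n + 4) = 2 * 2 ^ (2 * n + 3) := by
      rw [← pow_succ']
    rw [p1, p2]
    nlinarith [hd]
  -- 2^(2n+4) divides d^2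
  have hdvd2 : 2 ^ (2 * n + 4) ∣ d ^ 2 := by
    have := (Nat.dvd_add_right (pow_dvd_pow 2 (by omega : 2 * n + 4 ≤ 2 ^ n))).mpr
      (dvd_refl (2 ^ (2 * n + 4)))
    have h2 : 2 ^ (2 * n + 4) ∣ 2 ^ (2 ^ n) + d ^ 2 := by
      rw [← h1]
      exact Dvd.dvd.add (Dvd.dvd.mul_right (pow_dvd_pow 2 (by omega)) _)
        (Dvd.dvd.mul_right (dvd_refl _) _)
    exact (Nat.dvd_add_right (pow_dvd_pow 2 (by omega : 2 * n + 4 ≤ 2 ^ n))).mp h2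
  have hdvd : 2 ^ (n + 2) ∣ d := by
    have : (2 ^ (n + 2)) ^ 2 ∣ d ^ 2 := by
      rwa [← pow_mul, show (n + 2) * 2 = 2 * n + 4 by ring]
    exact (Nat.pow_dvd_pow_iff (by norm_num)).mp this
  obtain ⟨e, he⟩ := hdvd
  -- the key equation
  have key : 2 ^ (2 * n + 2) * l ^ 2 + l = 2 ^ (2 ^ n - 2 * n - 4) + e ^ 2 := by
    apply Nat.eq_of_mul_eq_mul_left (show 0 < 2 ^ (2 * n + 4) by positivity)
    have q1 : (2:ℕ) ^ (2 * n + 4) * 2 ^ (2 * n + 2) = 2 ^ (4 * n + 6) := by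
      rw [← pow_add]; ring_nf
    have q2 : (2:ℕ) ^ (2 * n + 4) * 2 ^ (2 ^ n - 2 * n - 4) = 2 ^ (2 ^ n) := by
      rw [← pow_add]; congr 1; omega
    have q3 : d ^ 2 = 2 ^ (2 * n + 4) * e ^ 2 := by
      rw [he, mul_pow, ← pow_mul]; ring_nf
    rw [mul_add, mul_add, ← mul_assoc, q1, q2]
    nlinarith [h1, q3]
  constructor
  · intro p hp hp3 hpl
    have hodd : p ≠ 2 := by omega
    haveI : Fact p.Prime := ⟨hp⟩
    -- cast key equation to ZMod p
    have hcast : ((2 : ZMod p) ^ (2 * n + 2) * (l : ZMod p) ^ 2 + l) =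
        2 ^ (2 ^ n - 2 * n - 4) + (e : ZMod p) ^ 2 := by
      exact_mod_cast congrArg (Nat.cast : ℕ → ZMod p) key
    have hl0 : (l : ZMod p) = 0 := (ZMod.natCast_eq_zero_iff l p).mpr hpl
    rw [hl0] at hcast
    simp at hcast
    -- exponent is even
    obtain ⟨m, hm⟩ : ∃ m, 2 ^ n - 2 * n - 4 = 2 * m := by
      have : Even (2 ^ n) := by
        refine (Nat.even_pow).mpr ⟨even_iff_two_dvd.mpr (dvd_refl 2), by omega⟩
      obtain ⟨c, hc⟩ := this
      exact ⟨c - n - 2, by omega⟩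
    rw [hm] at hcast
    have hu : (2 : ZMod p) ^ m ≠ 0 := by
      apply pow_ne_zero
      have : ((2:ℕ) : ZMod p) ≠ 0 := by
        rw [Ne, ZMod.natCast_eq_zero_iff]
        intro h2
        exact hodd ((Nat.prime_dvd_prime_iff_eq hp Nat.prime_two).mp h2)
      simpa using this
    have hsq : IsSquare (-1 : ZMod p) := by
      refine ⟨(e : ZMod p) * ((2 : ZMod p) ^ m)⁻¹, ?_⟩
      have h2 : (e : ZMod p) ^ 2 = -((2 : ZMod p) ^ m) ^ 2 := by
        have h3 : (2 : ZMod p) ^ (2 * m) = ((2 : ZMod p) ^ m) ^ 2 := by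
          rw [← pow_mul, mul_comm]
        rw [h3] at hcast
        linear_combination -hcast
      have hx : ((2 : ZMod p) ^ m) ^ 2 ≠ 0 := pow_ne_zero 2 hu
      field_simp
      linear_combination -h2
    rw [ZMod.exists_sq_eq_neg_one_iff] at hsq
    exact hsq hp3
  · -- mod 4
    have h4a : (2:ℕ) ^ (2 * n + 2) % 4 = 0 := by
      have : (4:ℕ) ∣ 2 ^ (2 * n + 2) := by
        have : (2:ℕ)^2 ∣ 2 ^ (2*n+2) := pow_dvd_pow 2 (by omega)
        simpa using this
      omega
    have h4b : (2:ℕ) ^ (2 ^ n - 2 * n - 4) % 4 = 0 := by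
      have : (4:ℕ) ∣ 2 ^ (2 ^ n - 2 * n - 4) := by
        have : (2:ℕ)^2 ∣ 2 ^ (2 ^ n - 2*n-4) := pow_dvd_pow 2 (by omega)
        simpa using this
      omega
    have hx : (2 ^ (2 * n + 2) * l ^ 2) % 4 = 0 := by
      rw [Nat.mul_mod, h4a, zero_mul, Nat.zero_mod]
    have he2 : e ^ 2 % 4 = 0 ∨ e ^ 2 % 4 = 1 := by
      rcases Nat.even_or_odd e with ⟨q, hq⟩ | ⟨q, hq⟩
      · left
        have h : e ^ 2 = 4 * (q * q) := by rw [hq]; ring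
        rw [h, Nat.mul_mod_right]
      · right
        have h : e ^ 2 = 4 * (q * q + q) + 1 := by rw [hq]; ring
        rw [h, Nat.mul_add_mod]
    set a := 2 ^ (2 * n + 2) * l ^ 2 with ha
    set b := 2 ^ (2 ^ n - 2 * n - 4) with hb
    set c := e ^ 2 with hc
    omega
end

section
/- Let n ≥ 5 be an integer and let F_n = 2^(2^n) + 1 be the n-th Fermat number, assumed composite. Then every proper factor of F_n can be expressed as 2^(2n+3)·λ + 1 + √((2^(2n+3)·λ + 1)² − F_n) or 2^(2n+3)·λ + 1 − √((2^(2n+3)·λ + 1)² − F_n) for some positive integer λ such that (2^(2n+3)·λ + 1)² − F_n is a perfect square, F_n ≤ (2^(2n+3)·λ + 1)², and λ ≤ 2^(2^n − (3n+5)). -/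
lemma aux_growth : ∀ n : ℕ, 5 ≤ n → 3 * n + 6 ≤ 2 ^ n := by
  intro n hn
  induction n with
  | zero => omega
  | succ k ih =>
    rcases Nat.lt_or_ge k 5 with h | h
    · interval_cases k <;> simp_all <;> omega
    · have := ih h
      have : 2 ^ (k + 1) = 2 * 2 ^ k := by ring
      omega

lemma aux_div_mod (n : ℕ) (hn : 1 < n) :
    ∀ f : ℕ, f ∣ 2 ^ 2 ^ n + 1 → f % 2 ^ (n + 2) = 1 := by
  intro f
  induction f using Nat.strong_induction_on with
  | _ f ih =>
    intro hf
    have hM : 1 < 2 ^ (n + 2) := Nat.one_lt_two_pow (by omega)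
    have hfpos : 0 < f := Nat.pos_of_dvd_of_pos hf (by positivity)
    rcases eq_or_ne f 1 with rfl | hf1
    · exact Nat.one_mod_eq_one.mpr (by omega)
    · set p := f.minFac with hp'
      have hp : p.Prime := Nat.minFac_prime hf1
      have hpd : p ∣ f := Nat.minFac_dvd f
      have hpF : p ∣ Nat.fermatNumber n := by
        rw [Nat.fermatNumber]; exact hpd.trans hf
      obtain ⟨k, hk⟩ := Nat.fermat_primeFactors_one_lt n p hn hp hpF
      obtain ⟨q, hq⟩ := hpd
      have hqf : q ∣ f := ⟨p, by rw [hq]; ring⟩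
      have hqpos : 0 < q := Nat.pos_of_dvd_of_pos hqf hfpos
      have hqlt : q < f := by nlinarith [hp.two_le]
      have hqF : q ∣ 2 ^ 2 ^ n + 1 := dvd_trans hqf hf
      have hqm := ih q hqlt hqF
      have hpm : p % 2 ^ (n + 2) = 1 := by
        rw [hk, Nat.mul_comm, Nat.mul_add_mod]
        exact Nat.one_mod_eq_one.mpr (by omega)
      rw [hq, Nat.mul_mod, hpm, hqm]
      simpa using Nat.one_mod_eq_one.mpr (by omega)

theorem stmt_19 (n : ℕ) (hn : 5 ≤ n) (F : ℕ) (hF : F = 2 ^ (2 ^ n) + 1)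
    (hcomp : ¬ F.Prime) :
    ∀ f : ℕ, f ∣ F → 1 < f → f < F →
      ∃ l d : ℕ, 0 < l ∧ (2 ^ (2 * n + 3) * l + 1) ^ 2 = F + d ^ 2 ∧
        F ≤ (2 ^ (2 * n + 3) * l + 1) ^ 2 ∧ l ≤ 2 ^ (2 ^ n - (3 * n + 5)) ∧
        (f = 2 ^ (2 * n + 3) * l + 1 + d ∨ f = 2 ^ (2 * n + 3) * l + 1 - d) := by
  intro f hfdvd hf1 hfF
  have hbig : 3 * n + 6 ≤ 2 ^ n := aux_growth n hn
  set e := 2 ^ n with he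
  set M := 2 ^ (n + 2) with hMdef
  have hM : 1 < M := Nat.one_lt_two_pow (by omega)
  have hFpos : 0 < F := by rw [hF]; positivity
  -- cofactor
  obtain ⟨g, hg⟩ := hfdvd
  have hgpos : 0 < g := by
    rcases Nat.eq_zero_or_pos g with h | h
    · rw [h, mul_zero] at hg; omega
    · exact h
  have hg1 : 1 < g := by
    have : g ≠ 1 := by
      intro h
      rw [h, mul_one] at hg
      omega
    omega
  -- both ≡ 1 mod M
  have hfm : f % M = 1 := aux_div_mod n (by omega) f (by rw [← hF]; exact Dvd.intro g hg.symm)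
  have hgm : g % M = 1 := aux_div_mod n (by omega) g (by rw [← hF]; exact Dvd.intro_left f hg.symm)
  -- write f = a*M+1, g = b*M+1
  obtain ⟨a, ha⟩ : ∃ a, f = a * M + 1 := by
    refine ⟨f / M, ?_⟩
    have h1 := Nat.div_add_mod f M
    have h2 : M * (f / M) = f / M * M := Nat.mul_comm _ _
    omega
  obtain ⟨b, hb⟩ : ∃ b, g = b * M + 1 := by
    refine ⟨g / M, ?_⟩
    have h1 := Nat.div_add_mod g M
    have h2 : M * (g / M) = g / M * M := Nat.mul_comm _ _
    omega
  have ha1 : 1 ≤ a := by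
    rcases Nat.eq_zero_or_pos a with h | h
    · rw [h, zero_mul] at ha; omega
    · exact h
  have hb1 : 1 ≤ b := by
    rcases Nat.eq_zero_or_pos b with h | h
    · rw [h, zero_mul] at hb; omega
    · exact h
  -- main equation
  set E2 := 2 ^ (e - (2 * n + 4)) with hE2def
  have hEM : 2 ^ e = E2 * M * M := by
    rw [hE2def, hMdef, ← pow_add, ← pow_add]
    congr 1
    omega
  have hkey : a * b * M + (a + b) = E2 * M := by
    have h1 : (a * M + 1) * (b * M + 1) = 2 ^ e + 1 := by rw [← ha, ← hb, ← hg, hF]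
    have h2 : (a * b * M + (a + b)) * M = (E2 * M) * M := by
      rw [hEM] at h1; ring_nf at h1 ⊢; nlinarith [h1]
    exact Nat.eq_of_mul_eq_mul_right (by omega) h2
  have habE : a * b < E2 := by nlinarith
  set c := E2 - a * b with hcdef
  have hE2c : E2 = a * b + c := by omega
  have hc : a + b = c * M := by
    have h2 : E2 * M = a * b * M + c * M := by rw [hE2c]; ring
    omega
  have hcpos : 0 < c := by
    rcases Nat.eq_zero_or_pos c with h | h
    · rw [h, zero_mul] at hc; omega
    · exact h
  -- bound on c
  have hab1 : a + b ≤ a * b + 1 := by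
    obtain ⟨a', rfl⟩ := Nat.exists_eq_add_of_le ha1
    obtain ⟨b', rfl⟩ := Nat.exists_eq_add_of_le hb1
    have hx : (1 + a') * (1 + b') = 1 + a' + b' + a' * b' := by ring
    omega
  have hcbd : c * M + c ≤ E2 + 1 := by omega
  set T := 2 ^ (e - (3 * n + 5)) with hTdef
  have hTM : T * M = 2 * E2 := by
    rw [hTdef, hMdef, hE2def]
    rw [← pow_add]
    have : 2 * 2 ^ (e - (2 * n + 4)) = 2 ^ (e - (2 * n + 4) + 1) := by ring
    rw [this]
    congr 1
    omega
  have hcT : c ≤ T := by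
    by_contra hcT
    push_neg at hcT
    have h3 : (T + 1) * M ≤ c * M := Nat.mul_le_mul_right M hcT
    have h4 : (T + 1) * M = T * M + M := by ring
    omega
  -- define m and d
  set m := 2 ^ (2 * n + 3) * c + 1 with hmdef
  have hMm : M * M = 2 * 2 ^ (2 * n + 3) := by
    rw [hMdef, ← pow_add]
    have h1 : n + 2 + (n + 2) = 2 * n + 3 + 1 := by ring
    rw [h1, pow_succ]
    ring
  have h2m : f + g = 2 * m := by
    have h3 : c * M * M = 2 * (2 ^ (2 * n + 3) * c) := by
      rw [mul_assoc, hMm]; ring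
    have h4 : (a + b) * M = c * M * M := by rw [hc]
    have h5 : (a + b) * M = a * M + b * M := by ring
    omega
  have hfgF : f * g = F := hg.symm
  rcases le_or_gt g f with hge | hlt
  · -- f ≥ g : d = m - g, f = m + d
    have hmg : g ≤ m := by omega
    have hm' : m = g + (m - g) := by omega
    have hf' : f = g + 2 * (m - g) := by omega
    have hsq : m ^ 2 = F + (m - g) ^ 2 := by
      rw [← hfgF]
      nth_rewrite 1 [hm']
      nth_rewrite 1 [hf']
      ring
    refine ⟨c, m - g, hcpos, ?_, ?_, hcT, Or.inl (by omega)⟩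
    · rw [← hmdef]; exact hsq
    · rw [← hmdef, hsq]; omega
  · -- f < g : d = m - f, f = m - d
    have hmf : f ≤ m := by omega
    have hm' : m = f + (m - f) := by omega
    have hg' : g = f + 2 * (m - f) := by omega
    have hsq : m ^ 2 = F + (m - f) ^ 2 := by
      rw [← hfgF]
      nth_rewrite 1 [hm']
      nth_rewrite 1 [hg']
      ring
    refine ⟨c, m - f, hcpos, ?_, ?_, hcT, Or.inr (by omega)⟩
    · rw [← hmdef]; exact hsq
    · rw [← hmdef, hsq]; omega
end
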